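/- Let U(1) act on ℂP¹ by z·[w₀ : w₁] = [z^(-a) w₀ : z^(-b) w₁] with a < b integers, moment map Φ([w₀:w₁]) = (a|w₀|² + b|w₁|²)/(|w₀|² + |w₁|²). Then the pushforward under Φ of the Liouville measure exp(ω) equals (1/(b-a))·χ_{[a,b]} times Lebesgue measure on ℝ, i.e., the Duistermaat–Heckman measure is the normalized uniform measure on the interval [a,b]. -/

import Mathlib

open MeasureTheory Set Metric

lemma dh_dens_cont (c : ℝ) : Continuous (fun z : ℂ => c / (Real.pi * (1 + ‖z‖ ^ 2) ^ 2)) := by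
  apply continuous_const.div
  · fun_prop
  · intro z
    positivity

lemma dh_ftc (c R : ℝ) (hc : 0 ≤ c) :
    ∫ y in (0:ℝ)..R, y * (c / (Real.pi * (1 + y ^ 2) ^ 2)) =
      c / (2 * Real.pi) * (R ^ 2 / (1 + R ^ 2)) := by
  have hπ := Real.pi_pos
  have key : ∀ y : ℝ, HasDerivAt (fun t : ℝ => -(c / (2 * Real.pi)) * (1 + t ^ 2)⁻¹)
      (y * (c / (Real.pi * (1 + y ^ 2) ^ 2))) y := by
    intro y
    have h1 : HasDerivAt (fun t : ℝ => 1 + t ^ 2) (2 * y) y := by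
      simpa using ((hasDerivAt_pow 2 y).const_add 1)
    have h2 := (h1.inv (by positivity)).const_mul (-(c / (2 * Real.pi)))
    refine h2.congr_deriv ?_
    field_simp
  rw [intervalIntegral.integral_eq_sub_of_hasDerivAt (fun y _ => key y)
      (by
        apply Continuous.intervalIntegrable
        exact continuous_id.mul (continuous_const.div (by fun_prop) (fun y => by positivity)))]
  field_simp
  ring

lemma dh_real_int (c R : ℝ) (hc : 0 ≤ c) (hR : 0 ≤ R) :
    ∫ z in closedBall (0 : ℂ) R, c / (Real.pi * (1 + ‖z‖ ^ 2) ^ 2) =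
      c * (R ^ 2 / (1 + R ^ 2)) := by
  have hπ := Real.pi_pos
  set f : ℝ → ℝ := (Icc 0 R).indicator (fun r => c / (Real.pi * (1 + r ^ 2) ^ 2)) with hf
  have h1 : ∫ z in closedBall (0 : ℂ) R, c / (Real.pi * (1 + ‖z‖ ^ 2) ^ 2)
      = ∫ z : ℂ, f ‖z‖ := by
    rw [← integral_indicator measurableSet_closedBall]
    congr 1
    funext z
    have hz : z ∈ closedBall (0:ℂ) R ↔ ‖z‖ ∈ Icc (0:ℝ) R := by
      simp [mem_closedBall, dist_zero_right, norm_nonneg]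
    by_cases h : z ∈ closedBall (0:ℂ) R
    · rw [indicator_of_mem h, hf, indicator_of_mem (hz.1 h)]
    · rw [indicator_of_notMem h, hf, indicator_of_notMem (fun hh => h (hz.2 hh))]
  rw [h1, integral_fun_norm_addHaar volume f]
  have h2 : ∫ y in Ioi (0:ℝ), y ^ (Module.finrank ℝ ℂ - 1) • f y
      = ∫ y in (0:ℝ)..R, y * (c / (Real.pi * (1 + y ^ 2) ^ 2)) := by
    rw [Complex.finrank_real_complex]
    have : ∀ y : ℝ, y ^ (2 - 1) • f y
        = (Icc 0 R).indicator (fun y => y * (c / (Real.pi * (1 + y ^ 2) ^ 2))) y := by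
      intro y
      simp only [show 2-1=1 from rfl, pow_one, smul_eq_mul, hf]
      by_cases h : y ∈ Icc (0:ℝ) R
      · rw [indicator_of_mem h, indicator_of_mem h]
      · rw [indicator_of_notMem h, indicator_of_notMem h, mul_zero]
    simp only [this]
    rw [integral_indicator measurableSet_Icc, Measure.restrict_restrict measurableSet_Icc]
    have : Icc (0:ℝ) R ∩ Ioi 0 = Ioc 0 R := by
      ext y
      simp only [mem_inter_iff, mem_Icc, mem_Ioi, mem_Ioc]
      constructor
      · rintro ⟨⟨_, h2⟩, h3⟩; exact ⟨h3, h2⟩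
      · rintro ⟨h1, h2⟩; exact ⟨⟨h1.le, h2⟩, h1⟩
    rw [this, intervalIntegral.integral_of_le hR]
  rw [h2, dh_ftc c R hc]
  simp only [Complex.finrank_real_complex, Measure.real, Complex.volume_ball, smul_eq_mul,
    ENNReal.toReal_mul, ENNReal.toReal_pow, ENNReal.toReal_ofReal zero_le_one,
    ENNReal.coe_toReal, NNReal.coe_real_pi]
  field_simp
  rw [nsmul_eq_mul]
  field_simp
  push_cast
  ring

lemma dh_key (c R : ℝ) (hc : 0 ≤ c) (hR : 0 ≤ R) :
    (volume.withDensity (fun z : ℂ => ENNReal.ofReal (c / (Real.pi * (1 + ‖z‖ ^ 2) ^ 2))))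
      (closedBall (0 : ℂ) R) = ENNReal.ofReal (c * (R ^ 2 / (1 + R ^ 2))) := by
  rw [withDensity_apply _ measurableSet_closedBall,
    ← ofReal_integral_eq_lintegral_ofReal
      ((dh_dens_cont c).continuousOn.integrableOn_compact (isCompact_closedBall _ _))
      (Filter.Eventually.of_forall fun z => by positivity),
    dh_real_int c R hc hR]

open Filter in
/-- Duistermaat–Heckman for `U(1)` acting on `ℂP¹`: in the affine chart
`z = w₁/w₀`, the Liouville measure `exp(ω)` has density
`(b-a)/(π(1+|z|²)²)` and the moment map is `Φ(z) = (a + b|z|²)/(1+|z|²)`;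
its pushforward under `Φ` is Lebesgue measure on `[a,b]`, i.e. the
Duistermaat–Heckman measure is `(b-a)⁻¹ χ_{[a,b]}` times `(b-a)`·Lebesgue. -/
theorem stmt8 (a b : ℤ) (hab : a < b) :
    Measure.map
      (fun z : ℂ => ((a : ℝ) + (b : ℝ) * ‖z‖ ^ 2) / (1 + ‖z‖ ^ 2))
      (volume.withDensity
        (fun z : ℂ => ENNReal.ofReal (((b : ℝ) - (a : ℝ)) / (Real.pi * (1 + ‖z‖ ^ 2) ^ 2)))) =
    volume.restrict (Set.Icc (a : ℝ) (b : ℝ)) := by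
  have hπ := Real.pi_pos
  have hab' : (a : ℝ) < (b : ℝ) := by exact_mod_cast hab
  set c : ℝ := (b : ℝ) - (a : ℝ) with hcdef
  have hc0 : 0 < c := sub_pos.2 hab'
  set Φ : ℂ → ℝ := fun z => ((a : ℝ) + (b : ℝ) * ‖z‖ ^ 2) / (1 + ‖z‖ ^ 2) with hΦdef
  have hΦc : Continuous Φ := Continuous.div (by fun_prop) (by fun_prop) (fun z => by positivity)
  set μ : Measure ℂ :=
    volume.withDensity (fun z : ℂ => ENNReal.ofReal (c / (Real.pi * (1 + ‖z‖ ^ 2) ^ 2))) with hμdef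
  -- total mass
  have hU : (⋃ n : ℕ, closedBall (0 : ℂ) n) = univ := by
    ext z
    simp only [mem_iUnion, mem_closedBall, dist_zero_right, mem_univ, iff_true]
    exact ⟨⌈‖z‖⌉₊, Nat.le_ceil _⟩
  have hmono : Monotone (fun n : ℕ => closedBall (0 : ℂ) n) :=
    fun m n h => closedBall_subset_closedBall (by exact_mod_cast h)
  have ht1 := tendsto_measure_iUnion_atTop (μ := μ) hmono
  rw [hU] at ht1
  have ht2 : Tendsto (fun n : ℕ => μ (closedBall (0 : ℂ) n)) atTop (nhds (ENNReal.ofReal c)) := by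
    have heq : ∀ n : ℕ, μ (closedBall (0 : ℂ) n)
        = ENNReal.ofReal (c * ((n : ℝ) ^ 2 / (1 + (n : ℝ) ^ 2))) :=
      fun n => dh_key c n hc0.le (Nat.cast_nonneg n)
    simp only [heq]
    apply (ENNReal.continuous_ofReal.tendsto c).comp
    have hat : Tendsto (fun n : ℕ => 1 + (n : ℝ) ^ 2) atTop atTop :=
      tendsto_atTop_add_const_left _ 1
        ((tendsto_pow_atTop two_ne_zero).comp tendsto_natCast_atTop_atTop)
    have hinv : Tendsto (fun n : ℕ => (1 + (n : ℝ) ^ 2)⁻¹) atTop (nhds 0) :=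
      hat.inv_tendsto_atTop
    have hfe : (fun n : ℕ => c * ((n : ℝ) ^ 2 / (1 + (n : ℝ) ^ 2)))
        = fun n : ℕ => c - c * (1 + (n : ℝ) ^ 2)⁻¹ := by
      funext n
      have h1 : (0:ℝ) < 1 + (n : ℝ) ^ 2 := by positivity
      field_simp
      ring
    rw [hfe]
    simpa using (tendsto_const_nhds.sub (hinv.const_mul c))
  have hμuniv : μ univ = ENNReal.ofReal c := tendsto_nhds_unique ht1 ht2
  haveI : IsFiniteMeasure μ := ⟨by rw [hμuniv]; exact ENNReal.ofReal_lt_top⟩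
  haveI : IsFiniteMeasure (μ.map Φ) := by
    constructor
    rw [Measure.map_apply hΦc.measurable MeasurableSet.univ, preimage_univ, hμuniv]
    exact ENNReal.ofReal_lt_top
  refine Measure.ext_of_Iic _ _ fun x => ?_
  rw [Measure.map_apply hΦc.measurable measurableSet_Iic,
    Measure.restrict_apply measurableSet_Iic]
  rcases lt_or_ge x (a : ℝ) with hx | hx
  · have hpre : Φ ⁻¹' (Iic x) = ∅ := by
      ext z
      simp only [mem_preimage, mem_Iic, mem_empty_iff_false, iff_false, not_le, hΦdef]
      have h1 : (0:ℝ) < 1 + ‖z‖ ^ 2 := by positivity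
      rw [lt_div_iff₀ h1]
      nlinarith [norm_nonneg z, sq_nonneg ‖z‖]
    have hint : Iic x ∩ Icc (a : ℝ) (b : ℝ) = ∅ := by
      ext y
      simp only [mem_inter_iff, mem_Iic, mem_Icc, mem_empty_iff_false, iff_false, not_and]
      intro h1 h2
      linarith
    rw [hpre, hint]
    simp
  · rcases lt_or_ge x (b : ℝ) with hx2 | hx2
    · have hbx : (0:ℝ) < (b : ℝ) - x := by linarith
      set R : ℝ := Real.sqrt ((x - (a : ℝ)) / ((b : ℝ) - x)) with hRdef
      have hR0 : 0 ≤ R := Real.sqrt_nonneg _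
      have hR2 : R ^ 2 = (x - (a : ℝ)) / ((b : ℝ) - x) :=
        Real.sq_sqrt (div_nonneg (by linarith) hbx.le)
      have hpre : Φ ⁻¹' (Iic x) = closedBall (0 : ℂ) R := by
        ext z
        simp only [mem_preimage, mem_Iic, mem_closedBall, dist_zero_right, hΦdef]
        have h1 : (0:ℝ) < 1 + ‖z‖ ^ 2 := by positivity
        rw [div_le_iff₀ h1]
        constructor
        · intro h
          have hs : ‖z‖ ^ 2 ≤ R ^ 2 := by
            rw [hR2, le_div_iff₀ hbx]
            nlinarith
          have := Real.sqrt_le_sqrt hs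
          rwa [Real.sqrt_sq (norm_nonneg z), Real.sqrt_sq hR0] at this
        · intro h
          have hs : ‖z‖ ^ 2 ≤ R ^ 2 := pow_le_pow_left₀ (norm_nonneg z) h 2
          rw [hR2, le_div_iff₀ hbx] at hs
          nlinarith
      have hint : Iic x ∩ Icc (a : ℝ) (b : ℝ) = Icc (a : ℝ) x := by
        ext y
        simp only [mem_inter_iff, mem_Iic, mem_Icc]
        constructor
        · rintro ⟨h1, h2, h3⟩; exact ⟨h2, h1⟩
        · rintro ⟨h1, h2⟩; exact ⟨h2, h1, by linarith⟩
      rw [hpre, hint, dh_key c R hc0.le hR0, Real.volume_Icc, hR2]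
      congr 1
      rw [hcdef]
      field_simp
      ring
    · have hpre : Φ ⁻¹' (Iic x) = univ := by
        ext z
        simp only [mem_preimage, mem_Iic, mem_univ, iff_true, hΦdef]
        have h1 : (0:ℝ) < 1 + ‖z‖ ^ 2 := by positivity
        rw [div_le_iff₀ h1]
        nlinarith [sq_nonneg ‖z‖]
      have hint : Iic x ∩ Icc (a : ℝ) (b : ℝ) = Icc (a : ℝ) (b : ℝ) :=
        inter_eq_right.2 fun y hy => le_trans hy.2 hx2
      rw [hpre, hint, hμuniv, Real.volume_Icc]
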